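/- arXiv:1912.02251 — 7 statements merged into one kernel-verified Lean document; each statement's English description precedes it below -/
import Mathlib

section
/- Let F : ℝ → ℝ be such that m ↦ F(m)·m is convex on [a,b] ⊆ [0,∞). Let 0 = d₀ < d₁ < ⋯ < d_k and 0 = z₀ < z₁ < ⋯ < z_k be real numbers such that (z_i - z_{i-1})/(d_i - d_{i-1}) ∈ [a,b] for all i = 1,…,k. Then z_k · F(z_k/d_k) ≤ Σ_{i=1}^{k} (z_i - z_{i-1}) · F((z_i - z_{i-1})/(d_i - d_{i-1})). -/
/-- Fundamental inequality via Jensen applied to the perspective function: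
if `m ↦ F m * m` is convex on `[a,b] ⊆ [0,∞)`, `0 = d₀ < d₁ < ⋯ < d_k`,
`0 = z₀ < z₁ < ⋯ < z_k`, and all successive difference ratios lie in `[a,b]`, then
`z_k * F (z_k / d_k) ≤ ∑_{i=1}^k (z_i - z_{i-1}) * F ((z_i - z_{i-1})/(d_i - d_{i-1}))`. -/
theorem fundamental_inequality
    (F : ℝ → ℝ) (a b : ℝ) (ha : 0 ≤ a) (hab : a < b)
    (hconv : ConvexOn ℝ (Set.Icc a b) (fun m => F m * m))
    (k : ℕ) (hk : 1 ≤ k) (d z : ℕ → ℝ)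
    (hd0 : d 0 = 0) (hz0 : z 0 = 0)
    (hdmono : ∀ i < k, d i < d (i + 1))
    (hzmono : ∀ i < k, z i < z (i + 1))
    (hratio : ∀ i, 1 ≤ i → i ≤ k → (z i - z (i - 1)) / (d i - d (i - 1)) ∈ Set.Icc a b) :
    z k * F (z k / d k) ≤
      ∑ i ∈ Finset.range k, (z (i + 1) - z i) * F ((z (i + 1) - z i) / (d (i + 1) - d i)) := by
  have hdsum : ∑ i ∈ Finset.range k, (d (i + 1) - d i) = d k := by
    rw [Finset.sum_range_sub, hd0, sub_zero]
  have hzsum : ∑ i ∈ Finset.range k, (z (i + 1) - z i) = z k := by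
    rw [Finset.sum_range_sub, hz0, sub_zero]
  have hdpos : ∀ i ∈ Finset.range k, 0 < d (i + 1) - d i := by
    intro i hi; exact sub_pos.2 (hdmono i (Finset.mem_range.1 hi))
  have hdk : 0 < d k := by
    rw [← hdsum]
    apply Finset.sum_pos hdpos
    exact ⟨0, Finset.mem_range.2 hk⟩
  set m : ℕ → ℝ := fun i => (z (i + 1) - z i) / (d (i + 1) - d i) with hm
  have hmem : ∀ i ∈ Finset.range k, m i ∈ Set.Icc a b := by
    intro i hi
    have := hratio (i + 1) (Nat.le_add_left 1 i) (Finset.mem_range.1 hi)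
    simpa using this
  set w : ℕ → ℝ := fun i => (d (i + 1) - d i) / d k with hw
  have hw0 : ∀ i ∈ Finset.range k, 0 ≤ w i := fun i hi =>
    div_nonneg (hdpos i hi).le hdk.le
  have hw1 : ∑ i ∈ Finset.range k, w i = 1 := by
    rw [← Finset.sum_div, hdsum, div_self hdk.ne']
  have hsum : ∑ i ∈ Finset.range k, w i • m i = z k / d k := by
    rw [← hzsum, Finset.sum_div]
    apply Finset.sum_congr rfl
    intro i hi
    have h := (hdpos i hi).ne'
    simp only [hw, hm, smul_eq_mul]
    field_simp
  have hJ := hconv.map_sum_le hw0 hw1 hmem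
  rw [hsum] at hJ
  simp only [smul_eq_mul] at hJ
  have := mul_le_mul_of_nonneg_left hJ hdk.le
  calc z k * F (z k / d k) = d k * (F (z k / d k) * (z k / d k)) := by
        field_simp
    _ ≤ d k * ∑ i ∈ Finset.range k, w i * (F (m i) * m i) := this
    _ = ∑ i ∈ Finset.range k, (z (i + 1) - z i) * F ((z (i + 1) - z i) / (d (i + 1) - d i)) := by
        rw [Finset.mul_sum]
        apply Finset.sum_congr rfl
        intro i hi
        have h := (hdpos i hi).ne'
        simp only [hw, hm]
        field_simp
end

section
/- Let F be a continuous cumulative distribution function supported on [a,b] ⊆ [0,∞) with F(b) = 1, and suppose m ↦ F(m)·m is convex on [a,b]. Consider a k-separating menu with prices 0 < p₁ < p₂ < ⋯ < p_n and qualities 0 < q₁ < ⋯ < q_n such that m_i := (p_i - p_{i-1})/(q_i - q_{i-1}) ∈ [a,b] for all i (with p₀ = q₀ = 0) and m₁ < m₂ < ⋯ < m_n. Then the revenue of the full menu, π(C) = p_n - Σ_{i=1}^{n}(p_i - p_{i-1})·F(m_i), is at most the revenue of the 1-separating menu {(p_n, q_n)}, namely p_n·(1 - F(p_n/q_n)).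 -/

private lemma telescope_Icc (f : ℕ → ℝ) (n : ℕ) :
    ∑ i ∈ Finset.Icc 1 n, (f i - f (i - 1)) = f n - f 0 := by
  induction n with
  | zero => simp
  | succ k ih =>
    rw [Finset.sum_Icc_succ_top (by omega : 1 ≤ k + 1), ih]
    simp

/-- A 1-separating menu beats the full menu when `F(m)·m` is convex.
With prices `0 < p₁ < ⋯ < p_n`, qualities `0 < q₁ < ⋯ < q_n`, `p₀ = q₀ = 0`, and
ratios `m_i = (p_i - p_{i-1})/(q_i - q_{i-1}) ∈ [a,b]` strictly increasing, the full-menu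
revenue `p_n - ∑ (p_i - p_{i-1}) F(m_i)` is at most `p_n (1 - F (p_n / q_n))`. -/
theorem one_separating_beats_full_menu
    (F : ℝ → ℝ) (a b : ℝ) (ha : 0 ≤ a) (hab : a < b)
    (hFcont : ContinuousOn F (Set.Icc a b))
    (hFb : F b = 1)
    (hconv : ConvexOn ℝ (Set.Icc a b) (fun m => F m * m))
    (n : ℕ) (hn : 1 ≤ n) (p q : ℕ → ℝ)
    (hp0 : p 0 = 0) (hq0 : q 0 = 0)
    (hppos : 0 < p 1) (hqpos : 0 < q 1)
    (hpmono : ∀ i, 1 ≤ i → i < n → p i < p (i + 1))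
    (hqmono : ∀ i, 1 ≤ i → i < n → q i < q (i + 1))
    (hratio : ∀ i, 1 ≤ i → i ≤ n →
      (p i - p (i - 1)) / (q i - q (i - 1)) ∈ Set.Icc a b)
    (hratiomono : ∀ i, 1 ≤ i → i < n →
      (p i - p (i - 1)) / (q i - q (i - 1)) <
        (p (i + 1) - p i) / (q (i + 1) - q i)) :
    p n - ∑ i ∈ Finset.Icc 1 n, (p i - p (i - 1)) * F ((p i - p (i - 1)) / (q i - q (i - 1)))
      ≤ p n * (1 - F (p n / q n)) := by
  -- positivity of increments of q
  have hΔq : ∀ i, 1 ≤ i → i ≤ n → 0 < q i - q (i - 1) := by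
    intro i h1 h2
    rcases Nat.eq_or_lt_of_le h1 with h | h
    · simp [← h, hq0, hqpos]
    · have h1' : 1 ≤ i - 1 := by omega
      have h2' : i - 1 < n := by omega
      have := hqmono (i - 1) h1' h2'
      have : q (i - 1) < q i := by
        have e : i - 1 + 1 = i := by omega
        rwa [e] at this
      linarith
  -- telescoping sums
  have htq : ∑ i ∈ Finset.Icc 1 n, (q i - q (i - 1)) = q n := by
    rw [telescope_Icc, hq0, sub_zero]
  have htp : ∑ i ∈ Finset.Icc 1 n, (p i - p (i - 1)) = p n := by
    rw [telescope_Icc, hp0, sub_zero]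
  have hqn : 0 < q n := by
    rw [← htq]
    apply Finset.sum_pos
    · intro i hi
      simp only [Finset.mem_Icc] at hi
      exact hΔq i hi.1 hi.2
    · exact ⟨1, by simp [Finset.mem_Icc, hn]⟩
  -- Jensen
  set w : ℕ → ℝ := fun i => (q i - q (i - 1)) / q n with hw
  set z : ℕ → ℝ := fun i => (p i - p (i - 1)) / (q i - q (i - 1)) with hz
  have hw0 : ∀ i ∈ Finset.Icc 1 n, 0 ≤ w i := by
    intro i hi
    simp only [Finset.mem_Icc] at hi
    exact le_of_lt (div_pos (hΔq i hi.1 hi.2) hqn)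
  have hw1 : ∑ i ∈ Finset.Icc 1 n, w i = 1 := by
    rw [hw, ← Finset.sum_div, htq, div_self hqn.ne']
  have hmem : ∀ i ∈ Finset.Icc 1 n, z i ∈ Set.Icc a b := by
    intro i hi
    simp only [Finset.mem_Icc] at hi
    exact hratio i hi.1 hi.2
  have hwz : ∑ i ∈ Finset.Icc 1 n, w i • z i = p n / q n := by
    rw [← htp, Finset.sum_div]
    apply Finset.sum_congr rfl
    intro i hi
    simp only [Finset.mem_Icc] at hi
    have h := (hΔq i hi.1 hi.2).ne'
    have h' := hqn.ne'
    simp only [hw, hz, smul_eq_mul]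
    field_simp
  have hJ := hconv.map_sum_le hw0 hw1 hmem
  rw [hwz] at hJ
  simp only [smul_eq_mul] at hJ
  -- rewrite RHS of Jensen
  have hRHS : ∑ i ∈ Finset.Icc 1 n, w i * (F (z i) * z i)
      = (∑ i ∈ Finset.Icc 1 n, (p i - p (i - 1)) * F (z i)) / q n := by
    rw [Finset.sum_div]
    apply Finset.sum_congr rfl
    intro i hi
    simp only [Finset.mem_Icc] at hi
    have h := (hΔq i hi.1 hi.2).ne'
    simp only [hw, hz]
    field_simp
  rw [hRHS] at hJ
  have hJ' : p n * F (p n / q n) ≤ ∑ i ∈ Finset.Icc 1 n, (p i - p (i - 1)) * F (z i) := by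
    have := mul_le_mul_of_nonneg_right hJ hqn.le
    rw [div_mul_cancel₀ _ hqn.ne'] at this
    calc p n * F (p n / q n) = F (p n / q n) * (p n / q n) * q n := by
          field_simp
      _ ≤ _ := this
  simp only [hz] at hJ'
  linarith
end

section
/- Suppose the function g(m) = F(m)·m is continuous but not convex on an open interval (a,b), where F is a continuous CDF supported on [a,b] ⊆ (0,∞). Then there exist points (x₁,y₁),(x₂,y₂) in E* = {(x,y) : x/y ∈ (a,b), y > 0} such that the perspective function f(x,y) = x·F(x/y) violates midpoint convexity: f((x₁+x₂)/2, (y₁+y₂)/2) > (f(x₁,y₁) + f(x₂,y₂))/2, and moreover x₂/y₂ ≠ x₁/y₁ for such a violating pair. -/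
theorem midpoint_violation (g : ℝ → ℝ) (a b : ℝ)
    (hg : Continuous g) (h : ¬ ConvexOn ℝ (Set.Ioo a b) g) :
    ∃ m₁ m₂, m₁ ∈ Set.Ioo a b ∧ m₂ ∈ Set.Ioo a b ∧ m₁ ≠ m₂ ∧
      g ((m₁ + m₂) / 2) > (g m₁ + g m₂) / 2 := by
  rw [ConvexOn] at h
  push_neg at h
  obtain ⟨x, hx, y, hy, p, q, hp, hq, hpq, hviol⟩ := h (convex_Ioo a b)
  simp only [smul_eq_mul] at hviol
  have hp' : p = 1 - q := by linarith
  rw [hp'] at hviol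
  have hxy : x ≠ y := by
    rintro rfl
    have h1 : (1 - q) * x + q * x = x := by ring
    have h2 : (1 - q) * g x + q * g x = g x := by ring
    rw [h1, h2] at hviol
    exact lt_irrefl _ hviol
  set L : ℝ → ℝ := fun t => (1 - t) * x + t * y with hL
  set line : ℝ → ℝ := fun t => (1 - t) * g x + t * g y with hline
  set φ : ℝ → ℝ := fun t => g (L t) - line t with hφ
  have hφcont : Continuous φ := by
    apply Continuous.sub
    · exact hg.comp (by fun_prop)
    · fun_prop
  have hφq : 0 < φ q := by
    simp only [hφ, hL, hline]
    linarith
  have hq1 : q ∈ Set.Icc (0:ℝ) 1 := ⟨hq, by linarith⟩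
  have hφ0 : φ 0 = 0 := by simp [hφ, hL, hline]
  have hφ1 : φ 1 = 0 := by simp [hφ, hL, hline]
  obtain ⟨s₀, hs₀mem, hs₀max⟩ := (isCompact_Icc (a := (0:ℝ)) (b := 1)).exists_isMaxOn
    (Set.nonempty_Icc.2 zero_le_one) hφcont.continuousOn
  set M := φ s₀ with hM
  have hMpos : 0 < M := lt_of_lt_of_le hφq (hs₀max hq1)
  set S := Set.Icc (0:ℝ) 1 ∩ φ ⁻¹' {M} with hS
  have hSclosed : IsClosed S := isClosed_Icc.inter (isClosed_singleton.preimage hφcont)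
  have hSne : S.Nonempty := ⟨s₀, hs₀mem, rfl⟩
  have hSbdd : BddBelow S := ⟨0, fun t ht => ht.1.1⟩
  set s := sInf S with hs
  have hsS : s ∈ S := hSclosed.csInf_mem hSne hSbdd
  have hsIcc : s ∈ Set.Icc (0:ℝ) 1 := hsS.1
  have hφs : φ s = M := hsS.2
  have hs0 : 0 < s := by
    rcases lt_or_eq_of_le hsIcc.1 with h' | h'
    · exact h'
    · exfalso; rw [← h', hφ0] at hφs; linarith
  have hs1 : s < 1 := by
    rcases lt_or_eq_of_le hsIcc.2 with h' | h'
    · exact h'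
    · exfalso; rw [h', hφ1] at hφs; linarith
  set δ := min s (1 - s) with hδ
  have hδpos : 0 < δ := lt_min hs0 (by linarith)
  have hδs : δ ≤ s := min_le_left _ _
  have hδs1 : δ ≤ 1 - s := min_le_right _ _
  set u := s - δ with hu
  set v := s + δ with hv
  have huIcc : u ∈ Set.Icc (0:ℝ) 1 := Set.mem_Icc.2 ⟨by rw [hu]; linarith, by rw [hu]; linarith [hsIcc.2]⟩
  have hvIcc : v ∈ Set.Icc (0:ℝ) 1 := Set.mem_Icc.2 ⟨by rw [hv]; linarith [hsIcc.1], by rw [hv]; linarith⟩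
  have hφu : φ u < M := by
    rcases le_or_gt s (1 - s) with h' | h'
    · have hds : δ = s := min_eq_left h'
      have hu0 : u = 0 := by rw [hu, hds]; ring
      rw [hu0, hφ0]; exact hMpos
    · have hus : u < s := by rw [hu]; linarith
      have hnotS : u ∉ S := fun hmem => absurd (csInf_le hSbdd hmem) (not_le.2 hus)
      exact lt_of_le_of_ne (hs₀max huIcc) (fun he => hnotS ⟨huIcc, he⟩)
  have hφv : φ v ≤ M := hs₀max hvIcc
  clear_value L line φ M S s δ u v
  have hsmid : (u + v) / 2 = s := by rw [hu, hv]; ring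
  have hφmid : φ ((u + v) / 2) > (φ u + φ v) / 2 := by
    rw [hsmid, hφs]; linarith
  refine ⟨L u, L v, ?_, ?_, ?_, ?_⟩
  · have hm : (1 - u) • x + u • y ∈ Set.Ioo a b :=
      convex_Ioo a b hx hy (by linarith [huIcc.2]) huIcc.1 (by ring)
    simpa [hL, smul_eq_mul] using hm
  · have hm : (1 - v) • x + v • y ∈ Set.Ioo a b :=
      convex_Ioo a b hx hy (by linarith [hvIcc.2]) hvIcc.1 (by ring)
    simpa [hL, smul_eq_mul] using hm
  · simp only [hL]
    intro he
    have h2 : (v - u) * (y - x) = 0 := by linarith [he]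
    rcases mul_eq_zero.1 h2 with h' | h'
    · have : v = u := by linarith
      rw [hu, hv] at this; linarith
    · exact hxy (by linarith)
  · have hLmid : (L u + L v) / 2 = L ((u + v) / 2) := by simp only [hL]; ring
    have hlinemid : (line u + line v) / 2 = line ((u + v) / 2) := by simp only [hline]; ring
    simp only [hφ] at hφmid
    rw [hLmid]
    have := hφmid
    have h3 : line ((u+v)/2) = (line u + line v) / 2 := hlinemid.symm
    linarith [hφmid, h3]

/-- If `g m = F m * m` is continuous but not convex on `(a,b)` (with `F`
a continuous CDF strictly increasing on `[a,b] ⊆ (0,∞)`), then the perspective function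
`f (x,y) = x F (x/y)` violates midpoint convexity at some pair of points of
`E* = {(x,y) | x/y ∈ (a,b), y > 0}` with distinct ratios. -/
theorem perspective_midpoint_convexity_failure
    (F : ℝ → ℝ) (a b : ℝ) (ha : 0 < a) (hab : a < b)
    (hFcont : Continuous F)
    (hFmono : StrictMonoOn F (Set.Icc a b))
    (hnotconv : ¬ ConvexOn ℝ (Set.Ioo a b) (fun m => F m * m)) :
    ∃ x₁ y₁ x₂ y₂ : ℝ,
      (x₁ / y₁ ∈ Set.Ioo a b ∧ 0 < y₁) ∧
      (x₂ / y₂ ∈ Set.Ioo a b ∧ 0 < y₂) ∧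
      ((x₁ + x₂) / 2) * F (((x₁ + x₂) / 2) / ((y₁ + y₂) / 2))
        > (x₁ * F (x₁ / y₁) + x₂ * F (x₂ / y₂)) / 2 ∧
      x₂ / y₂ ≠ x₁ / y₁ := by
  obtain ⟨m₁, m₂, hm₁, hm₂, hne, hviol⟩ :=
    midpoint_violation (fun m => F m * m) a b (hFcont.mul continuous_id) hnotconv

  refine ⟨m₁, 1, m₂, 1, ⟨by rwa [div_one], one_pos⟩, ⟨by rwa [div_one], one_pos⟩, ?_, ?_⟩
  · have h1 : ((1:ℝ) + 1) / 2 = 1 := by norm_num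
    rw [h1, div_one, div_one, div_one]
    linarith [hviol]
  · rw [div_one, div_one]
    exact fun h => hne h.symm
end

section
/- Let F be a continuous CDF supported on [a,b] ⊆ [0,∞) and consider a menu C = {(p₁,q₁),…,(p_n,q_n)} with 0 < p₁ < ⋯ < p_n, 0 < q₁ < ⋯ < q_n, and m_i := (p_i-p_{i-1})/(q_i-q_{i-1}) ∈ [a,b] strictly increasing (p₀=q₀=0). Let C' = C \ {(p₁,q₁)}. If F(m)·m is convex on [m₁, m₂] then π(C) ≤ π(C'), and if F(m)·m is concave on [m₁, m₂] then π(C) ≥ π(C'), where π(C) = p_n - Σ_{i=1}^n (p_i - p_{i-1})·F(m_i) and π(C') = p_n - (p₁+ (p₂-p₁))·F((p₂)/(q₂)) - Σ_{i=3}^n (p_i-p_{i-1})·F(m_i), i.e., π(C') is computed with the ratio p₂/q₂ in place of m₁ and m₂. -/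
/-- Removing the lowest pair `(p₁,q₁)` from a menu increases (decreases)
revenue if `F(m)·m` is convex (concave) on `[m₁, m₂]`, where
`m_i = (p_i - p_{i-1})/(q_i - q_{i-1})`. -/
theorem remove_lowest_pair_revenue
    (F : ℝ → ℝ) (a b : ℝ) (ha : 0 ≤ a) (hab : a < b)
    (hFcont : ContinuousOn F (Set.Icc a b))
    (n : ℕ) (hn : 2 ≤ n) (p q : ℕ → ℝ)
    (hp0 : p 0 = 0) (hq0 : q 0 = 0)
    (hppos : 0 < p 1) (hqpos : 0 < q 1)
    (hpmono : ∀ i, 1 ≤ i → i < n → p i < p (i + 1))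
    (hqmono : ∀ i, 1 ≤ i → i < n → q i < q (i + 1))
    (hratio : ∀ i, 1 ≤ i → i ≤ n →
      (p i - p (i - 1)) / (q i - q (i - 1)) ∈ Set.Icc a b)
    (hratiomono : ∀ i, 1 ≤ i → i < n →
      (p i - p (i - 1)) / (q i - q (i - 1)) <
        (p (i + 1) - p i) / (q (i + 1) - q i)) :
    (ConvexOn ℝ (Set.Icc (p 1 / q 1) ((p 2 - p 1) / (q 2 - q 1))) (fun m => F m * m) →
      p n - ∑ i ∈ Finset.Icc 1 n,
          (p i - p (i - 1)) * F ((p i - p (i - 1)) / (q i - q (i - 1)))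
        ≤ p n - p 2 * F (p 2 / q 2) - ∑ i ∈ Finset.Icc 3 n,
            (p i - p (i - 1)) * F ((p i - p (i - 1)) / (q i - q (i - 1))))
    ∧
    (ConcaveOn ℝ (Set.Icc (p 1 / q 1) ((p 2 - p 1) / (q 2 - q 1))) (fun m => F m * m) →
      p n - ∑ i ∈ Finset.Icc 1 n,
          (p i - p (i - 1)) * F ((p i - p (i - 1)) / (q i - q (i - 1)))
        ≥ p n - p 2 * F (p 2 / q 2) - ∑ i ∈ Finset.Icc 3 n,
            (p i - p (i - 1)) * F ((p i - p (i - 1)) / (q i - q (i - 1)))) := by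

  have h1n : 1 < n := hn
  have hq12 : q 1 < q 2 := by simpa using hqmono 1 le_rfl h1n
  have hp12 : p 1 < p 2 := by simpa using hpmono 1 le_rfl h1n
  have hq2pos : 0 < q 2 := hqpos.trans hq12
  have hq2ne : q 2 ≠ 0 := ne_of_gt hq2pos
  have hq1ne : q 1 ≠ 0 := ne_of_gt hqpos
  have hq21pos : (0:ℝ) < q 2 - q 1 := by linarith
  have hq21ne : q 2 - q 1 ≠ 0 := ne_of_gt hq21pos
  set m1 := p 1 / q 1 with hm1def
  set m2 := (p 2 - p 1) / (q 2 - q 1) with hm2def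
  have hm12 : m1 < m2 := by
    have := hratiomono 1 le_rfl h1n
    simpa [hp0, hq0, hm1def, hm2def] using this
  have hmem1 : m1 ∈ Set.Icc m1 m2 := ⟨le_rfl, hm12.le⟩
  have hmem2 : m2 ∈ Set.Icc m1 m2 := ⟨hm12.le, le_rfl⟩
  have hw1 : (0:ℝ) ≤ q 1 / q 2 := by positivity
  have hw2 : (0:ℝ) ≤ (q 2 - q 1) / q 2 := by positivity
  have hwsum : q 1 / q 2 + (q 2 - q 1) / q 2 = 1 := by field_simp; ring
  have hq1m : q 1 * m1 = p 1 := by rw [hm1def]; field_simp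
  have hq21m : (q 2 - q 1) * m2 = p 2 - p 1 := by rw [hm2def]; field_simp
  have hr : q 2 * (p 2 / q 2) = p 2 := by field_simp
  have hcomb : (q 1 / q 2) • m1 + ((q 2 - q 1) / q 2) • m2 = p 2 / q 2 := by
    simp only [smul_eq_mul]
    field_simp [hm1def, hm2def]
    linear_combination hq1m + hq21m
  have hset : Finset.Icc 1 n = insert 1 (insert 2 (Finset.Icc 3 n)) := by
    ext x; simp only [Finset.mem_Icc, Finset.mem_insert]; omega
  have hnm1 : (1:ℕ) ∉ insert 2 (Finset.Icc 3 n) := by simp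
  have hnm2 : (2:ℕ) ∉ Finset.Icc 3 n := by simp
  have hsplit : ∑ i ∈ Finset.Icc 1 n,
      (p i - p (i - 1)) * F ((p i - p (i - 1)) / (q i - q (i - 1)))
      = p 1 * F m1 + (p 2 - p 1) * F m2
        + ∑ i ∈ Finset.Icc 3 n,
          (p i - p (i - 1)) * F ((p i - p (i - 1)) / (q i - q (i - 1))) := by
    rw [hset, Finset.sum_insert hnm1, Finset.sum_insert hnm2]
    simp [hp0, hq0, hm1def, hm2def]
    ring
  constructor
  · intro hc
    have hj := hc.2 hmem1 hmem2 hw1 hw2 hwsum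
    rw [hcomb] at hj
    simp only [smul_eq_mul] at hj
    have h2 := mul_le_mul_of_nonneg_left hj hq2pos.le
    have e1 : q 2 * (F (p 2 / q 2) * (p 2 / q 2)) = p 2 * F (p 2 / q 2) := by
      rw [show q 2 * (F (p 2 / q 2) * (p 2 / q 2))
          = (q 2 * (p 2 / q 2)) * F (p 2 / q 2) from by ring, hr]
    have e2 : q 2 * (q 1 / q 2 * (F m1 * m1) + (q 2 - q 1) / q 2 * (F m2 * m2))
        = p 1 * F m1 + (p 2 - p 1) * F m2 := by
      have e3 : q 2 * (q 1 / q 2 * (F m1 * m1) + (q 2 - q 1) / q 2 * (F m2 * m2))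
          = q 1 * (F m1 * m1) + (q 2 - q 1) * (F m2 * m2) := by
        field_simp
      rw [e3]; linear_combination F m1 * hq1m + F m2 * hq21m
    have key : p 2 * F (p 2 / q 2) ≤ p 1 * F m1 + (p 2 - p 1) * F m2 := by
      linarith
    rw [hsplit]; linarith
  · intro hc
    have hj := hc.2 hmem1 hmem2 hw1 hw2 hwsum
    rw [hcomb] at hj
    simp only [smul_eq_mul] at hj
    have h2 := mul_le_mul_of_nonneg_left hj hq2pos.le
    have e1 : q 2 * (F (p 2 / q 2) * (p 2 / q 2)) = p 2 * F (p 2 / q 2) := by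
      rw [show q 2 * (F (p 2 / q 2) * (p 2 / q 2))
          = (q 2 * (p 2 / q 2)) * F (p 2 / q 2) from by ring, hr]
    have e2 : q 2 * (q 1 / q 2 * (F m1 * m1) + (q 2 - q 1) / q 2 * (F m2 * m2))
        = p 1 * F m1 + (p 2 - p 1) * F m2 := by
      have e3 : q 2 * (q 1 / q 2 * (F m1 * m1) + (q 2 - q 1) / q 2 * (F m2 * m2))
          = q 1 * (F m1 * m1) + (q 2 - q 1) * (F m2 * m2) := by
        field_simp
      rw [e3]; linear_combination F m1 * hq1m + F m2 * hq21m
    have key : p 1 * F m1 + (p 2 - p 1) * F m2 ≤ p 2 * F (p 2 / q 2) := by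
      linarith
    rw [ge_iff_le, hsplit]; linarith
end

section
/- Let F be a continuous CDF with m ↦ F(m)·m convex on [a,b]. Fix a menu C = {(p₁,q₁),…,(p_n,q_n)} with 0<p₁<⋯<p_n, 0<q₁<⋯<q_n and all successive ratios m_i = (p_i-p_{i-1})/(q_i-q_{i-1}) in [a,b] and strictly increasing. Let μ:{1,…,k}→{1,…,n} be strictly increasing with μ(k)=n, μ(0):=0, and let C' be the sub-menu consisting of the pairs with indices in the image of μ. If F(m)m is convex on [m_{μ(j-1)+1}, m_{μ(j)}] for every j with μ(j) - μ(j-1) > 1, then π(C) ≤ π(C'). -/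
/-- Telescoping sum over `Ioc`. -/
lemma tele_sum (f : ℕ → ℝ) (l r : ℕ) (h : l ≤ r) :
    ∑ i ∈ Finset.Ioc l r, (f i - f (i - 1)) = f r - f l := by
  induction r, h using Nat.le_induction with
  | base => simp
  | succ r hr ih =>
      rw [Finset.sum_Ioc_succ_top (by omega), ih]
      simp only [Nat.add_sub_cancel]
      ring

/-- Grouped Jensen step. -/
lemma group_le (F : ℝ → ℝ) (l r : ℕ) (hlr : l < r) (dp dq : ℕ → ℝ)
    (hdq : ∀ i, l < i → i ≤ r → 0 < dq i)
    (hmem : ∀ i, l < i → i ≤ r →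
      dp i / dq i ∈ Set.Icc (dp (l + 1) / dq (l + 1)) (dp r / dq r))
    (hconv : 1 < r - l →
      ConvexOn ℝ (Set.Icc (dp (l + 1) / dq (l + 1)) (dp r / dq r)) (fun m => F m * m)) :
    (∑ i ∈ Finset.Ioc l r, dp i) *
        F ((∑ i ∈ Finset.Ioc l r, dp i) / (∑ i ∈ Finset.Ioc l r, dq i))
      ≤ ∑ i ∈ Finset.Ioc l r, dp i * F (dp i / dq i) := by
  rcases eq_or_lt_of_le (Nat.succ_le_of_lt hlr) with hr | hr
  · -- singleton group
    subst hr
    simp [Nat.Ioc_succ_singleton, mul_comm]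
  · have hconv' := hconv (by omega)
    set t := Finset.Ioc l r with ht
    have hmemt : ∀ i ∈ t, l < i ∧ i ≤ r := by
      intro i hi; exact Finset.mem_Ioc.mp hi
    have hw0 : ∀ i ∈ t, (0:ℝ) ≤ dq i := fun i hi =>
      (hdq i (hmemt i hi).1 (hmemt i hi).2).le
    have hne : (l + 1) ∈ t := Finset.mem_Ioc.mpr ⟨Nat.lt_succ_self l, hr.le⟩
    have hsum : 0 < ∑ i ∈ t, dq i :=
      Finset.sum_pos' hw0 ⟨l + 1, hne, hdq _ (Nat.lt_succ_self l) hr.le⟩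
    have hz : ∀ i ∈ t, dp i / dq i ∈
        Set.Icc (dp (l + 1) / dq (l + 1)) (dp r / dq r) := fun i hi =>
      hmem i (hmemt i hi).1 (hmemt i hi).2
    have hj := hconv'.map_centerMass_le hw0 hsum hz
    have hdpq : ∀ i ∈ t, dq i • (dp i / dq i) = dp i := by
      intro i hi
      rw [smul_eq_mul, mul_div_cancel₀ _ (hdq i (hmemt i hi).1 (hmemt i hi).2).ne']
    have hcm : t.centerMass dq (fun i => dp i / dq i)
        = (∑ i ∈ t, dp i) / (∑ i ∈ t, dq i) := by
      rw [Finset.centerMass, Finset.sum_congr rfl hdpq, smul_eq_mul, inv_mul_eq_div]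
    rw [hcm] at hj
    have hj' := mul_le_mul_of_nonneg_left hj hsum.le
    calc (∑ i ∈ t, dp i) *
            F ((∑ i ∈ t, dp i) / (∑ i ∈ t, dq i))
        = (∑ i ∈ t, dq i) *
            (F ((∑ i ∈ t, dp i) / (∑ i ∈ t, dq i)) *
              ((∑ i ∈ t, dp i) / (∑ i ∈ t, dq i))) := by
          field_simp
      _ ≤ (∑ i ∈ t, dq i) *
            t.centerMass dq ((fun m => F m * m) ∘ fun i => dp i / dq i) := hj'
      _ = ∑ i ∈ t, dp i * F (dp i / dq i) := by
          rw [Finset.centerMass, smul_eq_mul, ← mul_assoc,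
            mul_inv_cancel₀ hsum.ne', one_mul]
          refine Finset.sum_congr rfl fun i hi => ?_
          rw [smul_eq_mul, Function.comp_apply, ← mul_assoc,
            mul_comm (dq i) (F (dp i / dq i)), mul_assoc,
            mul_div_cancel₀ _ (hdq i (hmemt i hi).1 (hmemt i hi).2).ne', mul_comm]

/-- Sub-menu dominance under groupwise convexity. Given a menu with
strictly increasing prices, qualities, and ratios `m_i`, and a strictly increasing
selection `μ` of indices with `μ k = n` (and `μ 0 = 0`), if `F(m)·m` is convex on
`[m_{μ(j-1)+1}, m_{μ(j)}]` for every group with more than one element, then the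
sub-menu revenue is at least the full-menu revenue. -/
theorem submenu_dominance
    (F : ℝ → ℝ) (a b : ℝ) (ha : 0 ≤ a) (hab : a < b)
    (hFcont : ContinuousOn F (Set.Icc a b))
    (n k : ℕ) (hn : 1 ≤ n) (hk : 1 ≤ k) (p q : ℕ → ℝ)
    (hp0 : p 0 = 0) (hq0 : q 0 = 0)
    (hppos : 0 < p 1) (hqpos : 0 < q 1)
    (hpmono : ∀ i, 1 ≤ i → i < n → p i < p (i + 1))
    (hqmono : ∀ i, 1 ≤ i → i < n → q i < q (i + 1))
    (hratio : ∀ i, 1 ≤ i → i ≤ n →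
      (p i - p (i - 1)) / (q i - q (i - 1)) ∈ Set.Icc a b)
    (hratiomono : ∀ i, 1 ≤ i → i < n →
      (p i - p (i - 1)) / (q i - q (i - 1)) <
        (p (i + 1) - p i) / (q (i + 1) - q i))
    (μ : ℕ → ℕ) (hμ0 : μ 0 = 0) (hμk : μ k = n)
    (hμmono : ∀ j, j < k → μ j < μ (j + 1))
    (hgroupconv : ∀ j, 1 ≤ j → j ≤ k → 1 < μ j - μ (j - 1) →
      ConvexOn ℝ
        (Set.Icc ((p (μ (j - 1) + 1) - p (μ (j - 1))) / (q (μ (j - 1) + 1) - q (μ (j - 1))))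
                 ((p (μ j) - p (μ j - 1)) / (q (μ j) - q (μ j - 1))))
        (fun m => F m * m)) :
    p n - ∑ i ∈ Finset.Icc 1 n,
        (p i - p (i - 1)) * F ((p i - p (i - 1)) / (q i - q (i - 1)))
      ≤ p n - ∑ j ∈ Finset.Icc 1 k,
          (p (μ j) - p (μ (j - 1))) *
            F ((p (μ j) - p (μ (j - 1))) / (q (μ j) - q (μ (j - 1)))) := by
  set dp : ℕ → ℝ := fun i => p i - p (i - 1) with hdp
  set dq : ℕ → ℝ := fun i => q i - q (i - 1) with hdq
  set m : ℕ → ℝ := fun i => dp i / dq i with hm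
  -- positivity of increments
  have hdppos : ∀ i, 1 ≤ i → i ≤ n → 0 < dp i := by
    intro i h1 h2
    rcases eq_or_lt_of_le h1 with h | h
    · simp [hdp, ← h, hp0, hppos]
    · have := hpmono (i - 1) (by omega) (by omega)
      have hi : i - 1 + 1 = i := by omega
      rw [hi] at this
      simp [hdp, sub_pos, this]
  have hdqpos : ∀ i, 1 ≤ i → i ≤ n → 0 < dq i := by
    intro i h1 h2
    rcases eq_or_lt_of_le h1 with h | h
    · simp [hdq, ← h, hq0, hqpos]
    · have := hqmono (i - 1) (by omega) (by omega)
      have hi : i - 1 + 1 = i := by omega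
      rw [hi] at this
      simp [hdq, sub_pos, this]
  -- monotonicity of ratios
  have hmstep : ∀ i, 1 ≤ i → i < n → m i < m (i + 1) := by
    intro i h1 h2
    have := hratiomono i h1 h2
    simpa [hm, hdp, hdq, Nat.add_sub_cancel] using this
  have hmmono : ∀ i i', 1 ≤ i → i ≤ i' → i' ≤ n → m i ≤ m i' := by
    intro i i' h1 h2 h3
    induction i', h2 using Nat.le_induction with
    | base => exact le_rfl
    | succ i' hii' ih =>
        exact le_trans (ih (by omega)) (hmstep i' (by omega) (by omega)).le
  -- μ is monotone up to k
  have hμle : ∀ j j', j ≤ j' → j' ≤ k → μ j ≤ μ j' := by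
    intro j j' h2 h3
    induction j', h2 using Nat.le_induction with
    | base => exact le_rfl
    | succ j' hjj' ih =>
        exact le_trans (ih (by omega)) (hμmono j' (by omega)).le
  have hμn : ∀ j, j ≤ k → μ j ≤ n := by
    intro j hj
    calc μ j ≤ μ k := hμle j k hj le_rfl
      _ = n := hμk
  -- main inequality by induction on the number of groups
  have key : ∀ K, K ≤ k →
      ∑ j ∈ Finset.Icc 1 K,
          (p (μ j) - p (μ (j - 1))) *
            F ((p (μ j) - p (μ (j - 1))) / (q (μ j) - q (μ (j - 1))))
        ≤ ∑ i ∈ Finset.Icc 1 (μ K), dp i * F (dp i / dq i) := by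
    intro K hK
    induction K with
    | zero => simp [hμ0]
    | succ K ih =>
        have hKk : K < k := hK
        set l := μ K with hl
        set r := μ (K + 1) with hr
        have hlr : l < r := hμmono K hKk
        have hrn : r ≤ n := hμn (K + 1) hK
        have hgrp : (p r - p l) * F ((p r - p l) / (q r - q l))
            ≤ ∑ i ∈ Finset.Ioc l r, dp i * F (dp i / dq i) := by
          have htp : ∑ i ∈ Finset.Ioc l r, dp i = p r - p l := tele_sum p l r hlr.le
          have htq : ∑ i ∈ Finset.Ioc l r, dq i = q r - q l := tele_sum q l r hlr.le
          rw [← htp, ← htq]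
          refine group_le F l r hlr dp dq (fun i h1 h2 => hdqpos i (by omega) (by omega))
            (fun i h1 h2 => ?_) (fun hone => ?_)
          · exact ⟨hmmono (l + 1) i (by omega) (by omega) (by omega),
              hmmono i r (by omega) h2 hrn⟩
          · have := hgroupconv (K + 1) (by omega) hK (by simpa [← hl, ← hr] using hone)
            simpa [hdp, hdq, ← hl, ← hr, Nat.add_sub_cancel] using this
        have hsplit : ∑ i ∈ Finset.Icc 1 l, dp i * F (dp i / dq i)
              + ∑ i ∈ Finset.Ioc l r, dp i * F (dp i / dq i)
            = ∑ i ∈ Finset.Icc 1 r, dp i * F (dp i / dq i) := by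
          rw [show Finset.Icc 1 l = Finset.Ioc 0 l from Finset.Icc_add_one_left_eq_Ioc 0 l,
            show Finset.Icc 1 r = Finset.Ioc 0 r from Finset.Icc_add_one_left_eq_Ioc 0 r]
          exact Finset.sum_Ioc_consecutive _ (Nat.zero_le l) hlr.le
        rw [Finset.sum_Icc_succ_top (Nat.one_le_iff_ne_zero.mpr (Nat.succ_ne_zero K)),
          ← hsplit]
        have hμK : K + 1 - 1 = K := by omega
        rw [hμK]
        exact add_le_add (ih (by omega)) hgrp
  have hfin := key k le_rfl
  rw [hμk] at hfin
  exact sub_le_sub_left hfin (p n)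
end

section
/- Let n ≥ 1, fix qualities 0 < q₁ < ⋯ < q_n and positive constants κ₁,…,κ_n and α > 0. Let F be a nondecreasing continuous CDF. For price vectors p, p' in the convex set P (as defined by positive demands with strictly increasing ratio sequence, p₀=q₀=0), define supply sᵢ(pᵢ) = κᵢ·pᵢ^{1/α} and demands dᵢ(p) = F(mᵢ₊₁(p)) - F(mᵢ(p)) for i < n, dₙ(p) = 1 - F(mₙ(p)), where mᵢ(p) = (pᵢ - pᵢ₋₁)/(qᵢ - qᵢ₋₁). Then the excess supply map ζ(p) = (s₁(p₁)-d₁(p),…,sₙ(pₙ)-dₙ(p)) is strictly monotone on P: for all p ≠ p' in P, ⟨ζ(p) - ζ(p'), p - p'⟩ > 0. -/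
open Real

lemma abel_aux (u g : ℕ → ℝ) (hu0 : u 0 = 0) : ∀ k : ℕ,
    (∑ i ∈ Finset.Icc 1 k, u i * (g (i+1) - g i)) - u (k+1) * g (k+1)
      = ∑ i ∈ Finset.Icc 1 (k+1), (u (i-1) - u i) * g i := by
  intro k
  induction k with
  | zero => simp [hu0]
  | succ k ih =>
      rw [Finset.sum_Icc_succ_top (by omega : 1 ≤ k+1),
          Finset.sum_Icc_succ_top (by omega : 1 ≤ k+2), ← ih]
      simp
      ring

lemma rpow_term_nonneg {x y c : ℝ} (hx : 0 ≤ x) (hy : 0 ≤ y) (hc : 0 < c) :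
    0 ≤ (x ^ c - y ^ c) * (x - y) := by
  rcases lt_trichotomy x y with h | h | h
  · have := Real.rpow_lt_rpow hx h hc
    nlinarith
  · simp [h]
  · have := Real.rpow_lt_rpow hy h hc
    nlinarith

lemma rpow_term_pos {x y c : ℝ} (hx : 0 ≤ x) (hy : 0 ≤ y) (hc : 0 < c) (hne : x ≠ y) :
    0 < (x ^ c - y ^ c) * (x - y) := by
  rcases lt_trichotomy x y with h | h | h
  · have := Real.rpow_lt_rpow hx h hc
    nlinarith
  · exact absurd h hne
  · have := Real.rpow_lt_rpow hy h hc
    nlinarith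


/-- The excess supply map `ζ p = (sᵢ(pᵢ) - dᵢ(p))ᵢ` is strictly monotone on
the convex set `P` of admissible price vectors: `⟨ζ p - ζ p', p - p'⟩ > 0` for `p ≠ p'`. -/
theorem excess_supply_strictly_monotone
    (n : ℕ) (hn : 1 ≤ n) (q κ : ℕ → ℝ) (hq0 : q 0 = 0)
    (hqpos : 0 < q 1) (hqmono : ∀ i, 1 ≤ i → i < n → q i < q (i + 1))
    (hκ : ∀ i, 1 ≤ i → i ≤ n → 0 < κ i)
    (α : ℝ) (hα : 0 < α)
    (a b : ℝ) (ha : 0 ≤ a) (hab : a < b)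
    (F : ℝ → ℝ) (hFcont : Continuous F) (hFmono : Monotone F)
    -- the ratio function
    (m : (ℕ → ℝ) → ℕ → ℝ)
    (hm : ∀ p i, m p i = (p i - p (i - 1)) / (q i - q (i - 1)))
    -- supply and demand
    (s : ℕ → ℝ → ℝ) (hs : ∀ i t, s i t = κ i * t ^ (1 / α))
    (d : (ℕ → ℝ) → ℕ → ℝ)
    (hd : ∀ p i, 1 ≤ i → i < n → d p i = F (m p (i + 1)) - F (m p i))
    (hdn : ∀ p, d p n = 1 - F (m p n))
    -- the admissible set P
    (P : Set (ℕ → ℝ))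
    (hP : P = {p : ℕ → ℝ | p 0 = 0 ∧ 0 < p 1 ∧
      (∀ i, 1 ≤ i → i < n → p i < p (i + 1)) ∧
      (∀ i, 1 ≤ i → i < n → m p i < m p (i + 1)) ∧
      m p n < b ∧ (∀ i, 1 ≤ i → i ≤ n → m p i ∈ Set.Icc a b)}) :
    ∀ p ∈ P, ∀ p' ∈ P, (∃ i, 1 ≤ i ∧ i ≤ n ∧ p i ≠ p' i) →
      0 < ∑ i ∈ Finset.Icc 1 n,
        ((s i (p i) - d p i) - (s i (p' i) - d p' i)) * (p i - p' i) := by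
  intro p hp p' hp' ⟨i₀, hi₀1, hi₀n, hi₀ne⟩
  rw [hP] at hp hp'
  obtain ⟨hp0, hp1, hpinc, -, -, -⟩ := hp
  obtain ⟨hp'0, hp'1, hp'inc, -, -, -⟩ := hp'
  -- positivity of prices
  have ppos : ∀ (r : ℕ → ℝ), r 0 = 0 → 0 < r 1 →
      (∀ i, 1 ≤ i → i < n → r i < r (i + 1)) →
      ∀ i, 1 ≤ i → i ≤ n → 0 < r i := by
    intro r h0 h1 hinc i hi1 hin
    induction i with
    | zero => omega
    | succ j ih =>
        rcases eq_or_lt_of_le hi1 with h | h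
        · rwa [← h]
        · have hj1 : 1 ≤ j := by omega
          have hjn : j < n := by omega
          exact lt_trans (ih hj1 (by omega)) (hinc j hj1 hjn)
  have hppos := ppos p hp0 hp1 hpinc
  have hp'pos := ppos p' hp'0 hp'1 hp'inc
  -- q differences positive
  have hqdiff : ∀ i, 1 ≤ i → i ≤ n → 0 < q i - q (i - 1) := by
    intro i h1 h2
    rcases eq_or_lt_of_le h1 with h | h
    · simp [← h, hq0, hqpos]
    · have := hqmono (i - 1) (by omega) (by omega)
      have hi : i - 1 + 1 = i := by omega
      rw [hi] at this
      linarith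
  -- m times q diff = p diff
  have hmq : ∀ (r : ℕ → ℝ) i, 1 ≤ i → i ≤ n →
      m r i * (q i - q (i - 1)) = r i - r (i - 1) := by
    intro r i h1 h2
    rw [hm, div_mul_cancel₀ _ (hqdiff i h1 h2).ne']
  obtain ⟨k, rfl⟩ : ∃ k, n = k + 1 := ⟨n - 1, by omega⟩
  set u : ℕ → ℝ := fun i => p i - p' i with hu
  have hu0 : u 0 = 0 := by simp [hu, hp0, hp'0]
  set g : ℕ → ℝ := fun i => F (m p i) - F (m p' i) with hg
  -- split the sum
  have hsplit : ∀ i ∈ Finset.Icc 1 (k+1),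
      ((s i (p i) - d p i) - (s i (p' i) - d p' i)) * (p i - p' i)
      = (s i (p i) - s i (p' i)) * u i - (d p i - d p' i) * u i := by
    intro i hi
    simp only [hu]
    ring
  rw [Finset.sum_congr rfl hsplit, Finset.sum_sub_distrib]
  -- demand sum is nonpositive
  have hdemand : ∑ i ∈ Finset.Icc 1 (k+1), (d p i - d p' i) * u i ≤ 0 := by
    have hrw : ∑ i ∈ Finset.Icc 1 (k+1), (d p i - d p' i) * u i
        = (∑ i ∈ Finset.Icc 1 k, u i * (g (i+1) - g i)) - u (k+1) * g (k+1) := by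
      rw [Finset.sum_Icc_succ_top (by omega : 1 ≤ k+1)]
      have h1 : ∀ i ∈ Finset.Icc 1 k, (d p i - d p' i) * u i = u i * (g (i+1) - g i) := by
        intro i hi
        simp only [Finset.mem_Icc] at hi
        rw [hd p i hi.1 (by omega), hd p' i hi.1 (by omega)]
        simp only [hg]
        ring
      rw [Finset.sum_congr rfl h1, hdn p, hdn p']
      simp only [hg]
      ring
    rw [hrw, abel_aux u g hu0 k]
    apply Finset.sum_nonpos
    intro i hi
    simp only [Finset.mem_Icc] at hi
    have hqd := hqdiff i hi.1 hi.2
    have h1 := hmq p i hi.1 hi.2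
    have h2 := hmq p' i hi.1 hi.2
    have hud : u (i-1) - u i = -((q i - q (i-1)) * (m p i - m p' i)) := by
      simp only [hu]
      nlinarith [h1, h2]
    rw [hud]
    have hFd : 0 ≤ (m p i - m p' i) * (g i) := by
      simp only [hg]
      rcases le_total (m p i) (m p' i) with h | h
      · have := hFmono h
        nlinarith
      · have := hFmono h
        nlinarith
    nlinarith
  -- supply sum is positive
  have hsupply : 0 < ∑ i ∈ Finset.Icc 1 (k+1), (s i (p i) - s i (p' i)) * u i := by
    apply Finset.sum_pos'
    · intro i hi
      simp only [Finset.mem_Icc] at hi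
      rw [hs, hs]
      have : κ i * p i ^ (1/α) - κ i * p' i ^ (1/α)
          = κ i * (p i ^ (1/α) - p' i ^ (1/α)) := by ring
      rw [this]
      have := rpow_term_nonneg (le_of_lt (hppos i hi.1 hi.2)) (le_of_lt (hp'pos i hi.1 hi.2))
        (by positivity : (0:ℝ) < 1/α)
      have hκi := hκ i hi.1 hi.2
      simp only [hu]
      nlinarith
    · refine ⟨i₀, Finset.mem_Icc.mpr ⟨hi₀1, hi₀n⟩, ?_⟩
      rw [hs, hs]
      have : κ i₀ * p i₀ ^ (1/α) - κ i₀ * p' i₀ ^ (1/α)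
          = κ i₀ * (p i₀ ^ (1/α) - p' i₀ ^ (1/α)) := by ring
      rw [this]
      have := rpow_term_pos (le_of_lt (hppos i₀ hi₀1 hi₀n)) (le_of_lt (hp'pos i₀ hi₀1 hi₀n))
        (by positivity : (0:ℝ) < 1/α) hi₀ne
      have hκi := hκ i₀ hi₀1 hi₀n
      simp only [hu]
      nlinarith
  linarith
end

section
/- Let n ≥ 1, fix qualities 0 < q₁ < ⋯ < q_n, positive constants κᵢ, α > 0, and a nondecreasing continuous F with F(b)=1. On the convex open set P of admissible price vectors, define ψ(p) = Σᵢ κᵢ·pᵢ^{(α+1)/α}/(1 + 1/α) - pₙ + Σ_{i=0}^{n-1} F₂(mᵢ₊₁(p))·(qᵢ₊₁ - qᵢ), where F₂(x) = ∫_a^x F(m) dm, mᵢ(p) = (pᵢ-pᵢ₋₁)/(qᵢ-qᵢ₋₁), p₀=q₀=0. Then ψ is continuously differentiable on P and its partial derivatives satisfy ∂ψ/∂pᵢ(p) = sᵢ(pᵢ) - dᵢ(p), with sᵢ(pᵢ)=κᵢ pᵢ^{1/α}, dᵢ(p) = F(mᵢ₊₁(p)) - F(mᵢ(p)) for i<n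 and dₙ(p) = 1 - F(mₙ(p)). -/
open Real

/-- The potential `ψ` is continuously differentiable on `P` with
partial derivatives equal to excess supply: `∂ψ/∂pᵢ (p) = sᵢ(pᵢ) - dᵢ(p)`. -/
theorem potential_gradient_is_excess_supply
    (n : ℕ) (hn : 1 ≤ n) (q κ : ℕ → ℝ) (hq0 : q 0 = 0)
    (hqpos : 0 < q 1) (hqmono : ∀ i, 1 ≤ i → i < n → q i < q (i + 1))
    (hκ : ∀ i, 1 ≤ i → i ≤ n → 0 < κ i)
    (α : ℝ) (hα : 0 < α)
    (a b : ℝ) (ha : 0 ≤ a) (hab : a < b)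
    (F : ℝ → ℝ) (hFcont : Continuous F) (hFmono : Monotone F) (hFb : F b = 1)
    (m : (ℕ → ℝ) → ℕ → ℝ)
    (hm : ∀ p i, m p i = (p i - p (i - 1)) / (q i - q (i - 1)))
    (s : ℕ → ℝ → ℝ) (hs : ∀ i t, s i t = κ i * t ^ (1 / α))
    (d : (ℕ → ℝ) → ℕ → ℝ)
    (hd : ∀ p i, 1 ≤ i → i < n → d p i = F (m p (i + 1)) - F (m p i))
    (hdn : ∀ p, d p n = 1 - F (m p n))
    (F₂ : ℝ → ℝ) (hF₂ : ∀ x, F₂ x = ∫ t in a..x, F t)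
    (ψ : (ℕ → ℝ) → ℝ)
    (hψ : ∀ p, ψ p =
      (∑ i ∈ Finset.Icc 1 n, κ i * p i ^ ((α + 1) / α) / (1 + 1 / α)) - p n
        + ∑ i ∈ Finset.range n, F₂ (m p (i + 1)) * (q (i + 1) - q i))
    (P : Set (ℕ → ℝ))
    (hP : P = {p : ℕ → ℝ | p 0 = 0 ∧ 0 < p 1 ∧
      (∀ i, 1 ≤ i → i < n → p i < p (i + 1)) ∧
      (∀ i, 1 ≤ i → i < n → m p i < m p (i + 1)) ∧
      m p n < b ∧ (∀ i, 1 ≤ i → i ≤ n → m p i ∈ Set.Icc a b)}) :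
    ∀ i, 1 ≤ i → i ≤ n →
      (∀ p ∈ P,
        HasDerivAt (fun t => ψ (Function.update p i t)) (s i (p i) - d p i) (p i))
      ∧ ContinuousOn (fun p => s i (p i) - d p i) P := by
  have h1α : (0:ℝ) < 1 + 1/α := by positivity
  have he1 : (α+1)/α = 1 + 1/α := by field_simp
  have he2 : (α+1)/α - 1 = 1/α := by field_simp; ring
  have hF₂d : ∀ x, HasDerivAt F₂ (F x) x := by
    intro x
    have h := intervalIntegral.integral_hasDerivAt_right
      (hFcont.intervalIntegrable a x)
      hFcont.stronglyMeasurable.stronglyMeasurableAtFilter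
      hFcont.continuousAt
    have hfun : F₂ = fun u => ∫ t in a..u, F t := funext hF₂
    rw [hfun]; exact h
  intro i hi1 hin
  constructor
  · intro p hp
    rw [hP] at hp
    obtain ⟨hp0, hp1, hpmono, _, _, _⟩ := hp
    have hppos : ∀ k, 1 ≤ k → k ≤ n → 0 < p k := by
      intro k
      induction k with
      | zero => intro h; omega
      | succ k ih =>
        intro _ hkn
        rcases Nat.eq_zero_or_pos k with rfl | hk
        · simpa using hp1
        · exact (ih hk (by omega)).trans (hpmono k hk (by omega))
    have hpi : 0 < p i := hppos i hi1 hin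
    have key : (fun t => ψ (Function.update p i t)) = fun t =>
        (∑ j ∈ Finset.Icc 1 n, κ j * (Function.update p i t j) ^ ((α + 1) / α) / (1 + 1 / α))
          - Function.update p i t n
          + ∑ j ∈ Finset.range n,
              F₂ ((Function.update p i t (j+1) - Function.update p i t j) / (q (j+1) - q j))
                * (q (j+1) - q j) := by
      funext t
      rw [hψ]
      simp [hm]
    have hA : HasDerivAt
        (fun t => ∑ j ∈ Finset.Icc 1 n,
          κ j * (Function.update p i t j) ^ ((α + 1) / α) / (1 + 1 / α))
        (κ i * p i ^ (1/α)) (p i) := by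
      have hsum : HasDerivAt
          (fun t => ∑ j ∈ Finset.Icc 1 n,
            κ j * (Function.update p i t j) ^ ((α + 1) / α) / (1 + 1 / α))
          (∑ j ∈ Finset.Icc 1 n, (if j = i then κ i * p i ^ (1/α) else 0)) (p i) := by
        apply HasDerivAt.fun_sum
        intro j hj
        by_cases hne : j = i
        · subst hne
          have hfun : (fun t => κ j * (Function.update p j t j) ^ ((α + 1) / α) / (1 + 1 / α))
              = fun t => κ j * t ^ ((α + 1) / α) / (1 + 1 / α) := by
            funext t; rw [Function.update_self]
          rw [hfun]
          have h1 : HasDerivAt (fun t : ℝ => t ^ ((α+1)/α))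
              (((α+1)/α) * p j ^ ((α+1)/α - 1)) (p j) :=
            Real.hasDerivAt_rpow_const (Or.inl (ne_of_gt hpi))
          have h2 := (h1.const_mul (κ j)).div_const (1 + 1/α)
          refine h2.congr_deriv ?_
          rw [if_pos rfl, he2, he1]
          field_simp
        · simp only [if_neg hne]
          have hfun : (fun t => κ j * (Function.update p i t j) ^ ((α + 1) / α) / (1 + 1 / α))
              = fun _ => κ j * (p j) ^ ((α + 1) / α) / (1 + 1 / α) := by
            funext t; rw [Function.update_of_ne hne]
          rw [hfun]
          exact hasDerivAt_const _ _
      rwa [Finset.sum_ite_eq' (Finset.Icc 1 n) i, if_pos (by simp [Finset.mem_Icc]; omega)] at hsum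
    have hB : HasDerivAt (fun t => Function.update p i t n) (if n = i then 1 else 0) (p i) := by
      rcases eq_or_ne n i with h | h
      · subst h
        simp only [if_pos rfl]
        have hfun : (fun t => Function.update p n t n) = fun t : ℝ => t := by
          funext t; rw [Function.update_self]
        rw [hfun]; exact hasDerivAt_id _
      · simp only [if_neg h]
        have hfun : (fun t => Function.update p i t n) = fun _ : ℝ => p n := by
          funext t; rw [Function.update_of_ne h]
        rw [hfun]; exact hasDerivAt_const _ _
    have hC : HasDerivAt
        (fun t => ∑ j ∈ Finset.range n,
            F₂ ((Function.update p i t (j+1) - Function.update p i t j) / (q (j+1) - q j))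
              * (q (j+1) - q j))
        (∑ j ∈ Finset.range n,
          ((if j = i - 1 then F (m p i) else 0) + (if j = i then -F (m p (i+1)) else 0))) (p i) := by
      apply HasDerivAt.fun_sum
      intro j hj
      simp only [Finset.mem_range] at hj
      have hΔ : 0 < q (j+1) - q j := by
        rcases Nat.eq_zero_or_pos j with rfl | hjpos
        · simpa [hq0] using hqpos
        · have := hqmono j hjpos hj; linarith
      by_cases hji : j + 1 = i
      · have hj_ne : j ≠ i := by omega
        have hL : HasDerivAt (fun t => (t - p j) / (q (j+1) - q j))
            (1 / (q (j+1) - q j)) (p i) :=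
          ((hasDerivAt_id (p i)).sub_const (p j)).div_const _
        have hval : (p i - p j) / (q (j+1) - q j) = m p i := by
          rw [hm, show i - 1 = j from by omega, hji]
        have hchain := (HasDerivAt.comp (p i) (hF₂d ((p i - p j) / (q (j+1) - q j))) hL).mul_const
          (q (j+1) - q j)
        rw [hval] at hchain
        have hfun : (fun t => F₂ ((Function.update p i t (j+1) - Function.update p i t j)
              / (q (j+1) - q j)) * (q (j+1) - q j))
            = fun t => (F₂ ∘ fun u => (u - p j) / (q (j+1) - q j)) t * (q (j+1) - q j) := by
          funext t
          have h1 : Function.update p i t (j+1) = t := by rw [hji, Function.update_self]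
          have h2 : Function.update p i t j = p j := Function.update_of_ne hj_ne _ _
          rw [h1, h2, Function.comp_apply]
        have hgoalval : (if j = i - 1 then F (m p i) else 0) + (if j = i then -F (m p (i+1)) else 0)
            = F (m p i) * (1 / (q (j+1) - q j)) * (q (j+1) - q j) := by
          rw [if_pos (by omega), if_neg hj_ne]
          field_simp; ring
        rw [hfun, hgoalval]
        exact hchain
      · rcases eq_or_ne j i with rfl | hj_ne
        · have hL : HasDerivAt (fun t => (p (j+1) - t) / (q (j+1) - q j))
              (-1 / (q (j+1) - q j)) (p j) := by
            have := ((hasDerivAt_id (p j)).const_sub (p (j+1))).div_const (q (j+1) - q j)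
            simpa using this
          have hval : (p (j+1) - p j) / (q (j+1) - q j) = m p (j+1) := by
            rw [hm, Nat.add_sub_cancel]
          have hchain := (HasDerivAt.comp (p j)
            (hF₂d ((p (j+1) - p j) / (q (j+1) - q j))) hL).mul_const (q (j+1) - q j)
          rw [hval] at hchain
          have hfun : (fun t => F₂ ((Function.update p j t (j+1) - Function.update p j t j)
                / (q (j+1) - q j)) * (q (j+1) - q j))
              = fun t => (F₂ ∘ fun u => (p (j+1) - u) / (q (j+1) - q j)) t * (q (j+1) - q j) := by
            funext t
            have h1 : Function.update p j t (j+1) = p (j+1) :=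
              Function.update_of_ne (by omega) _ _
            have h2 : Function.update p j t j = t := Function.update_self _ _ _
            rw [h1, h2, Function.comp_apply]
          have hgoalval : (if j = j - 1 then F (m p j) else 0) + (if j = j then -F (m p (j+1)) else 0)
              = F (m p (j+1)) * (-1 / (q (j+1) - q j)) * (q (j+1) - q j) := by
            rw [if_neg (by omega), if_pos rfl]
            field_simp; ring
          rw [hfun, hgoalval]
          exact hchain
        · have hfun : (fun t => F₂ ((Function.update p i t (j+1) - Function.update p i t j)
                / (q (j+1) - q j)) * (q (j+1) - q j))
              = fun _ : ℝ => F₂ ((p (j+1) - p j) / (q (j+1) - q j)) * (q (j+1) - q j) := by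
            funext t
            rw [Function.update_of_ne hji, Function.update_of_ne hj_ne]
          rw [if_neg (by omega : j ≠ i - 1), if_neg hj_ne, hfun]
          simpa using hasDerivAt_const (p i) _
    have hCsum : (∑ j ∈ Finset.range n,
          ((if j = i - 1 then F (m p i) else 0) + (if j = i then -F (m p (i+1)) else 0)))
        = F (m p i) + (if i ∈ Finset.range n then -F (m p (i+1)) else 0) := by
      rw [Finset.sum_add_distrib]
      rw [Finset.sum_ite_eq' (Finset.range n) (i-1) (fun _ => F (m p i)),
        Finset.sum_ite_eq' (Finset.range n) i (fun _ => -F (m p (i+1)))]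
      rw [if_pos (by simp [Finset.mem_range]; omega)]
    have hMain := (hA.sub hB).add hC
    rw [hCsum] at hMain
    rw [key]
    refine hMain.congr_deriv ?_
    rcases eq_or_lt_of_le hin with rfl | hlt
    · rw [hs, hdn, if_pos rfl, if_neg (by simp)]
      ring
    · rw [hs, hd p i hi1 hlt, if_neg (by omega), if_pos (by simp [Finset.mem_range]; omega)]
      ring
  · have hcm : ∀ k : ℕ, Continuous (fun p : ℕ → ℝ => F (m p k)) := by
      intro k
      have : (fun p : ℕ → ℝ => F (m p k))
          = fun p => F ((p k - p (k-1)) / (q k - q (k-1))) := by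
        funext p; rw [hm]
      rw [this]
      exact hFcont.comp (((continuous_apply k).sub (continuous_apply (k-1))).div_const _)
    have hcs : Continuous (fun p : ℕ → ℝ => s i (p i)) := by
      have : (fun p : ℕ → ℝ => s i (p i)) = fun p => κ i * (p i) ^ (1/α) := by
        funext p; rw [hs]
      rw [this]
      exact continuous_const.mul
        ((continuous_apply i).rpow_const (fun x => Or.inr (by positivity)))
    rcases eq_or_lt_of_le hin with rfl | hlt
    · have : (fun p : ℕ → ℝ => s i (p i) - d p i)
          = fun p => s i (p i) - (1 - F (m p i)) := by
        funext p; rw [hdn]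
      rw [this]
      exact (hcs.sub (continuous_const.sub (hcm i))).continuousOn
    · have : (fun p : ℕ → ℝ => s i (p i) - d p i)
          = fun p => s i (p i) - (F (m p (i+1)) - F (m p i)) := by
        funext p; rw [hd p i hi1 hlt]
      rw [this]
      exact (hcs.sub ((hcm (i+1)).sub (hcm i))).continuousOn
end
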